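/- Consequently, for a finite metric space (X, d) with minimum spanning tree T and a subset G ⊆ X, G is ε-connected if and only if the maximum weight edge of the minimal subtree of T spanning G is at most ε (where an empty or singleton G is ε-connected for every ε ≥ 0). -/

import Mathlib

open SimpleGraph

private lemma reach_side {X : Type*} {T : SimpleGraph X} {a b v u : X}
    (p : T.Walk v u)
    (hu : (T \ SimpleGraph.fromEdgeSet {s(a, b)}).Reachable u a ∨
          (T \ SimpleGraph.fromEdgeSet {s(a, b)}).Reachable u b) :
    (T \ SimpleGraph.fromEdgeSet {s(a, b)}).Reachable v a ∨
    (T \ SimpleGraph.fromEdgeSet {s(a, b)}).Reachable v b := by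
  induction p with
  | nil => exact hu
  | @cons x c _ h _ ih =>
    by_cases hec : s(x, c) = s(a, b)
    · rw [Sym2.eq_iff] at hec
      rcases hec with ⟨rfl, rfl⟩ | ⟨rfl, rfl⟩
      · exact Or.inl (SimpleGraph.Reachable.refl _)
      · exact Or.inr (SimpleGraph.Reachable.refl _)
    · have hadj : (T \ SimpleGraph.fromEdgeSet {s(a, b)}).Adj x c := by
        rw [SimpleGraph.sdiff_adj, SimpleGraph.fromEdgeSet_adj]
        exact ⟨h, fun hmem => hec (by simpa using hmem.1)⟩
      rcases ih hu with h1 | h1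
      · exact Or.inl (hadj.reachable.trans h1)
      · exact Or.inr (hadj.reachable.trans h1)

private lemma chain_of_walk {X : Type*} [MetricSpace X] {T : SimpleGraph X}
    (w : Sym2 X → ℝ) (hw : ∀ x y : X, w s(x, y) = dist x y) (ε : ℝ)
    {u v : X} (W : T.Walk u v) (hWe : ∀ e ∈ W.edges, w e ≤ ε) :
    Relation.ReflTransGen (fun x y : X => dist x y ≤ ε) u v := by
  induction W with
  | nil => exact Relation.ReflTransGen.refl
  | @cons u c _ h p ih =>
    refine Relation.ReflTransGen.head ?_ (ih fun e he => hWe e (by simp [he]))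
    rw [← hw u c]
    exact hWe s(u, c) (by simp)

theorem mst_subtree_connectivity {X : Type*} [Fintype X] [DecidableEq X] [MetricSpace X]
    [Nonempty X]
    (T : SimpleGraph X) (w : Sym2 X → ℝ) (hw : ∀ x y : X, w s(x, y) = dist x y)
    (hT : T.IsTree)
    (hmin : ∀ T' : SimpleGraph X, T'.IsTree →
      ∑ e ∈ (Set.toFinite T.edgeSet).toFinset, w e ≤
        ∑ e ∈ (Set.toFinite T'.edgeSet).toFinset, w e)
    (ε : ℝ) (hε : 0 ≤ ε) (G : Set X) :
    (∀ p ∈ G, ∀ q ∈ G, Relation.ReflTransGen (fun x y : X => dist x y ≤ ε) p q) ↔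
      ∀ p ∈ G, ∀ q ∈ G, ∀ (W : T.Walk p q), W.IsPath → ∀ e ∈ W.edges, w e ≤ ε := by
  constructor
  · -- hard direction
    intro h p hp q hq W hW e heW
    revert heW
    induction e using Sym2.ind with
    | _ a b =>
    intro heW
    by_contra hwe
    push_neg at hwe
    have hab : T.Adj a b := W.adj_of_mem_edges heW
    set D : SimpleGraph X := T \ SimpleGraph.fromEdgeSet {s(a, b)} with hD
    have hDedge : D.edgeSet = T.edgeSet \ {s(a, b)} := by
      rw [hD, edgeSet_sdiff, edgeSet_fromEdgeSet, edgeSet_sdiff_sdiff_isDiag]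
    -- a and b are in different components of D
    have hbr : ¬ D.Reachable a b :=
      (isBridge_iff.mp ((isAcyclic_iff_forall_adj_isBridge.mp hT.IsAcyclic) hab))
    -- every vertex reaches a or b in D
    have side : ∀ v : X, D.Reachable v a ∨ D.Reachable v b := by
      intro v
      obtain ⟨pw⟩ := hT.isConnected.preconnected v a
      exact reach_side pw (Or.inl (SimpleGraph.Reachable.refl _))
    -- p and q are not reachable in D
    have hpq : ¬ D.Reachable p q := by
      intro hpq
      obtain ⟨c⟩ := hpq
      have hsub : ∀ e ∈ c.edges, e ∈ T.edgeSet := fun e he =>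
        (hDedge ▸ c.edges_subset_edgeSet he).1
      have hne : ∀ e ∈ c.edges, e ≠ s(a, b) := fun e he =>
        (hDedge ▸ c.edges_subset_edgeSet he).2
      have hWeq : W = ((c.transfer T hsub).toPath : T.Walk p q) :=
        (hT.existsUnique_path p q).unique hW (c.transfer T hsub).toPath.2
      rw [hWeq] at heW
      have := Walk.edges_toPath_subset (c.transfer T hsub) heW
      rw [Walk.edges_transfer] at this
      exact hne _ this rfl
    -- find a crossing step in the chain
    have cross : ∀ {u v : X},
        Relation.ReflTransGen (fun x y : X => dist x y ≤ ε) u v → ¬ D.Reachable u v →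
        ∃ x y : X, dist x y ≤ ε ∧ ¬ D.Reachable x y := by
      intro u v hchain
      induction hchain with
      | refl => exact fun hn => absurd (Reachable.refl _) hn
      | @tail c v hpc hcq ih =>
        intro hn
        by_cases hr : D.Reachable u c
        · exact ⟨c, v, hcq, fun hcv => hn (hr.trans hcv)⟩
        · exact ih hr
    obtain ⟨x, y, hxyd, hxy⟩ := cross (h p hp q hq) hpq
    have hxny : x ≠ y := fun hxe => hxy (hxe ▸ Reachable.refl x)
    -- s(x,y) is not an edge of T
    have hxyT : s(x, y) ∉ T.edgeSet := by
      intro hmem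
      by_cases hexy : s(x, y) = s(a, b)
      · have : w s(x, y) = dist x y := hw x y
        rw [hexy] at this
        linarith
      · exact hxy (SimpleGraph.Adj.reachable (by
          rw [hD, SimpleGraph.sdiff_adj, SimpleGraph.fromEdgeSet_adj]
          exact ⟨hmem, fun hc => hexy (by simpa using hc.1)⟩))
    set T' : SimpleGraph X := D ⊔ SimpleGraph.fromEdgeSet {s(x, y)} with hT'
    have hT'adj : T'.Adj x y := by
      rw [hT', sup_adj, fromEdgeSet_adj]
      exact Or.inr ⟨rfl, hxny⟩
    have hDle : D ≤ T' := le_sup_left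
    -- both a and b reach x in T'
    have habx : T'.Reachable a x ∧ T'.Reachable b x := by
      rcases side x with hxa | hxb
      · rcases side y with hya | hyb
        · exact absurd (hxa.trans hya.symm) hxy
        · exact ⟨(hxa.mono hDle).symm, ((hyb.mono hDle).symm.trans
            hT'adj.symm.reachable)⟩
      · rcases side y with hya | hyb
        · exact ⟨((hya.mono hDle).symm.trans hT'adj.symm.reachable),
            (hxb.mono hDle).symm⟩
        · exact absurd (hxb.trans hyb.symm) hxy
    have hconn : T'.Connected := by
      have hall : ∀ v : X, T'.Reachable v x := by
        intro v
        rcases side v with hva | hvb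
        · exact (hva.mono hDle).trans habx.1
        · exact (hvb.mono hDle).trans habx.2
      exact Connected.mk fun u v => (hall u).trans (hall v).symm
    have hacyc : T'.IsAcyclic := by
      intro v c hc
      by_cases hxyc : s(x, y) ∈ c.edges
      · have hreach : (T' \ fromEdgeSet {s(x, y)}).Reachable x y :=
          (adj_and_reachable_delete_edges_iff_exists_cycle.mpr ⟨v, c, hc, hxyc⟩).2
        have hle : T' \ fromEdgeSet {s(x, y)} ≤ D := by
          rw [hT', sup_sdiff_right_self]
          exact sdiff_le
        exact hxy (hreach.mono hle)
      · have hsub : ∀ e ∈ c.edges, e ∈ T.edgeSet := by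
          intro e he
          have := c.edges_subset_edgeSet he
          rw [hT', edgeSet_sup, edgeSet_fromEdgeSet] at this
          rcases this with hd | hd
          · exact (hDedge ▸ hd).1
          · exact absurd (hd.1 ▸ he) (by simpa using fun h' => hxyc (hd.1 ▸ he))
        exact hT.IsAcyclic (c.transfer T hsub) (hc.transfer hsub)
    have hT'tree : T'.IsTree := ⟨hconn, hacyc⟩
    -- edge set computation
    have hT'edge : T'.edgeSet = insert s(x, y) (T.edgeSet \ {s(a, b)}) := by
      rw [hT', edgeSet_sup, edgeSet_fromEdgeSet, hDedge]
      ext e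
      simp only [Set.mem_union, Set.mem_diff, Set.mem_singleton_iff, Set.mem_insert_iff,
        Set.mem_setOf_eq]
      constructor
      · rintro (⟨h1, h2⟩ | ⟨h1, _⟩)
        · exact Or.inr ⟨h1, h2⟩
        · exact Or.inl h1
      · rintro (rfl | ⟨h1, h2⟩)
        · exact Or.inr ⟨rfl, by simp [Sym2.isDiag_iff_proj_eq, hxny]⟩
        · exact Or.inl ⟨h1, h2⟩
    -- finset computation
    have heabF : s(a, b) ∈ (Set.toFinite T.edgeSet).toFinset := by
      rw [Set.Finite.mem_toFinset]; exact hab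
    have hF' : (Set.toFinite T'.edgeSet).toFinset =
        insert s(x, y) (((Set.toFinite T.edgeSet).toFinset).erase s(a, b)) := by
      ext e
      simp [Set.Finite.mem_toFinset, hT'edge, Finset.mem_insert, Finset.mem_erase,
        Set.mem_diff, and_comm]
    have hxyF : s(x, y) ∉ ((Set.toFinite T.edgeSet).toFinset).erase s(a, b) := by
      intro hc
      exact hxyT (by simpa using (Finset.mem_erase.mp hc).2)
    have hsum := hmin T' hT'tree
    rw [hF', Finset.sum_insert hxyF] at hsum
    have herase : ∑ e ∈ ((Set.toFinite T.edgeSet).toFinset).erase s(a, b), w e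
        = ∑ e ∈ (Set.toFinite T.edgeSet).toFinset, w e - w s(a, b) := by
      rw [eq_sub_iff_add_eq, Finset.sum_erase_add _ _ heabF]
    rw [herase] at hsum
    have hwxy : w s(x, y) = dist x y := hw x y
    linarith
  · -- easy direction
    intro h p hp q hq
    obtain ⟨W, hW⟩ := (hT.existsUnique_path p q).exists
    exact chain_of_walk w hw ε W (h p hp q hq W hW)
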